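/- Let L > 0, let ς_Ne > 0 and ς_Di > 0 be real numbers, and let λ ∈ ℂ. Suppose φ₁, φ₂ : ℝ → ℂ both satisfy the KdV spectral ODE with parameter λ on [0,L], and satisfy the boundary conditions φ₂(0) = φ₁(0), ς_Ne·φ₁''(0) + ς_Di·φ₂''(0) = 0, φ₁(L) = φ₂(L) = 0, φ₁'(0) = φ₂'(0) = 0, φ₁'(L) = 0, and φ₂''(L) = 0. Then φ₁(x) = 0 and φ₂(x) = 0 for all x ∈ [0,L]. -/

import Mathlib

/-- A function `φ : ℝ → ℂ` satisfies the KdV spectral ODE with parameter `lam` on `[0, L]`: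
it is three times continuously differentiable and `lam·φ + φ' + φ''' = 0` on `[0, L]`. -/
def KdVSpectralODE (lam : ℂ) (L : ℝ) (φ : ℝ → ℂ) : Prop :=
  ContDiff ℝ 3 φ ∧
    ∀ x ∈ Set.Icc (0 : ℝ) L, lam * φ x + deriv φ x + iteratedDeriv 3 φ x = 0

namespace KdVAux

open Set

/-- companion linear vector field for the third order ODE -/
noncomputable def T (lam : ℂ) : (ℂ × ℂ × ℂ) →L[ℂ] (ℂ × ℂ × ℂ) :=
  (((ContinuousLinearMap.fst ℂ ℂ ℂ).comp (ContinuousLinearMap.snd ℂ ℂ (ℂ × ℂ)))).prod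
    ((((ContinuousLinearMap.snd ℂ ℂ ℂ).comp (ContinuousLinearMap.snd ℂ ℂ (ℂ × ℂ)))).prod
      ((-lam) • ContinuousLinearMap.fst ℂ ℂ (ℂ × ℂ) -
        (ContinuousLinearMap.fst ℂ ℂ ℂ).comp (ContinuousLinearMap.snd ℂ ℂ (ℂ × ℂ))))

@[simp] lemma T_apply (lam : ℂ) (p : ℂ × ℂ × ℂ) :
    T lam p = (p.2.1, p.2.2, -lam * p.1 - p.2.1) := by
  simp [T]

lemma sys_unique_right {lam : ℂ} {a b : ℝ} {f : ℝ → ℂ × ℂ × ℂ}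
    (hf : ∀ t ∈ Icc a b, HasDerivAt f (T lam (f t)) t)
    (h0 : f a = 0) : ∀ t ∈ Icc a b, f t = 0 := by
  have key : EqOn f (fun _ => (0 : ℂ × ℂ × ℂ)) (Icc a b) := by
    apply ODE_solution_unique (v := fun _ p => T lam p) (fun _ => (T lam).lipschitz)
      (fun t ht => ((hf t ht).continuousAt).continuousWithinAt)
      (fun t ht => (hf t (Ico_subset_Icc_self ht)).hasDerivWithinAt)
      continuousOn_const
      (fun t _ => by
        convert (hasDerivAt_const t (0 : ℂ × ℂ × ℂ)).hasDerivWithinAt using 1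
        simp)
      (by simpa using h0)
  exact fun t ht => key ht

lemma sys_unique_left {lam : ℂ} {a b : ℝ} {f : ℝ → ℂ × ℂ × ℂ}
    (hf : ∀ t ∈ Icc a b, HasDerivAt f (T lam (f t)) t)
    (h0 : f b = 0) : ∀ t ∈ Icc a b, f t = 0 := by
  have key : EqOn f (fun _ => (0 : ℂ × ℂ × ℂ)) (Icc a b) := by
    apply ODE_solution_unique_of_mem_Icc_left (v := fun _ p => T lam p)
      (s := fun _ => univ) (fun _ _ => (T lam).lipschitz.lipschitzOnWith)
      (fun t ht => ((hf t ht).continuousAt).continuousWithinAt)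
      (fun t ht => (hf t (Ioc_subset_Icc_self ht)).hasDerivWithinAt)
      (fun _ _ => trivial)
      continuousOn_const
      (fun t _ => by
        convert (hasDerivAt_const t (0 : ℂ × ℂ × ℂ)).hasDerivWithinAt using 1
        simp)
      (fun _ _ => trivial)
      (by simpa using h0)
  exact fun t ht => key ht

lemma iteratedDeriv_two (φ : ℝ → ℂ) : iteratedDeriv 2 φ = deriv (deriv φ) := by
  rw [show (2 : ℕ) = 1 + 1 from rfl, iteratedDeriv_succ, iteratedDeriv_one]

lemma iteratedDeriv_three (φ : ℝ → ℂ) : iteratedDeriv 3 φ = deriv (deriv (deriv φ)) := by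
  rw [show (3 : ℕ) = 2 + 1 from rfl, iteratedDeriv_succ, iteratedDeriv_two]

lemma diffs {φ : ℝ → ℂ} (h : ContDiff ℝ 3 φ) :
    Differentiable ℝ φ ∧ Differentiable ℝ (deriv φ) ∧ Differentiable ℝ (deriv (deriv φ)) := by
  have h3 : ContDiff ℝ ((2 : WithTop ℕ∞) + 1) φ := by
    convert h using 2 <;> norm_num
  rw [contDiff_succ_iff_deriv] at h3
  obtain ⟨hd0, -, h2⟩ := h3
  have h2' : ContDiff ℝ ((1 : WithTop ℕ∞) + 1) (deriv φ) := by
    rw [one_add_one_eq_two]; exact h2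
  rw [contDiff_succ_iff_deriv] at h2'
  obtain ⟨hd1, -, h1⟩ := h2'
  exact ⟨hd0, hd1, h1.differentiable (by norm_num)⟩

/-- the ODE in derivative form -/
lemma ode_deriv {lam : ℂ} {L : ℝ} {φ : ℝ → ℂ} (h : KdVSpectralODE lam L φ) :
    ∀ x ∈ Icc (0 : ℝ) L, deriv (deriv (deriv φ)) x = -lam * φ x - deriv φ x := by
  intro x hx
  have := h.2 x hx
  rw [iteratedDeriv_three] at this
  linear_combination this

/-- The vector path of a solution satisfies the companion system. -/
lemma hasDerivAt_Phi {lam : ℂ} {L : ℝ} {φ : ℝ → ℂ} (h : KdVSpectralODE lam L φ) :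
    ∀ t ∈ Icc (0 : ℝ) L,
      HasDerivAt (fun x => (φ x, deriv φ x, deriv (deriv φ) x))
        (T lam (φ t, deriv φ t, deriv (deriv φ) t)) t := by
  obtain ⟨hd0, hd1, hd2⟩ := diffs h.1
  intro t ht
  have h3 : HasDerivAt (deriv (deriv φ)) (deriv (deriv (deriv φ)) t) t := (hd2 t).hasDerivAt
  rw [ode_deriv h t ht] at h3
  have := ((hd0 t).hasDerivAt.prodMk (((hd1 t).hasDerivAt).prodMk h3))
  simpa using this

end KdVAux

open Set KdVAux in
theorem stmt0 (L : ℝ) (hL : 0 < L) (ςNe ςDi : ℝ) (hNe : 0 < ςNe) (hDi : 0 < ςDi)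
    (lam : ℂ) (φ₁ φ₂ : ℝ → ℂ)
    (h1 : KdVSpectralODE lam L φ₁) (h2 : KdVSpectralODE lam L φ₂)
    (hb0 : φ₂ 0 = φ₁ 0)
    (hb1 : (ςNe : ℂ) * iteratedDeriv 2 φ₁ 0 + (ςDi : ℂ) * iteratedDeriv 2 φ₂ 0 = 0)
    (hb2 : φ₁ L = 0) (hb3 : φ₂ L = 0)
    (hb4 : deriv φ₁ 0 = 0) (hb5 : deriv φ₂ 0 = 0)
    (hb6 : deriv φ₁ L = 0) (hb7 : iteratedDeriv 2 φ₂ L = 0) :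
    ∀ x ∈ Set.Icc (0 : ℝ) L, φ₁ x = 0 ∧ φ₂ x = 0 := by
  simp only [iteratedDeriv_two] at hb1 hb7
  obtain ⟨hu0, hu1, hu2⟩ := diffs h1.1
  obtain ⟨hv0, hv1, hv2⟩ := diffs h2.1
  have h0L : (0 : ℝ) ∈ Icc (0 : ℝ) L := ⟨le_refl 0, hL.le⟩
  have hLL : L ∈ Icc (0 : ℝ) L := ⟨hL.le, le_refl L⟩
  have hdΦ₁ := hasDerivAt_Phi h1
  have hdΦ₂ := hasDerivAt_Phi h2
  -- the Wronskian components
  set Z1 : ℝ → ℂ := fun t => φ₁ t * deriv φ₂ t - deriv φ₁ t * φ₂ t with hZ1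
  set Z2 : ℝ → ℂ := fun t => φ₁ t * deriv (deriv φ₂) t - deriv (deriv φ₁) t * φ₂ t with hZ2
  set Z3 : ℝ → ℂ := fun t =>
    -(Z1 t) + (deriv φ₁ t * deriv (deriv φ₂) t - deriv (deriv φ₁) t * deriv φ₂ t) with hZ3
  have hdZ1 : ∀ s : ℝ, HasDerivAt Z1 (Z2 s) s := by
    intro s
    have := ((hu0 s).hasDerivAt.mul (hv1 s).hasDerivAt).sub
      (((hu1 s).hasDerivAt.mul (hv0 s).hasDerivAt))
    refine this.congr_deriv ?_
    simp only [hZ2]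
    ring
  have hdZ2 : ∀ s ∈ Icc (0 : ℝ) L, HasDerivAt Z2 (Z3 s) s := by
    intro s hs
    have h3u : HasDerivAt (deriv (deriv φ₁)) (-lam * φ₁ s - deriv φ₁ s) s := by
      have := (hu2 s).hasDerivAt; rwa [ode_deriv h1 s hs] at this
    have h3v : HasDerivAt (deriv (deriv φ₂)) (-lam * φ₂ s - deriv φ₂ s) s := by
      have := (hv2 s).hasDerivAt; rwa [ode_deriv h2 s hs] at this
    have := ((hu0 s).hasDerivAt.mul h3v).sub (h3u.mul (hv0 s).hasDerivAt)
    refine this.congr_deriv ?_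
    simp only [hZ3, hZ1]
    ring
  have hdZ3 : ∀ s ∈ Icc (0 : ℝ) L, HasDerivAt Z3 (-(Z2 s) + lam * Z1 s) s := by
    intro s hs
    have h3u : HasDerivAt (deriv (deriv φ₁)) (-lam * φ₁ s - deriv φ₁ s) s := by
      have := (hu2 s).hasDerivAt; rwa [ode_deriv h1 s hs] at this
    have h3v : HasDerivAt (deriv (deriv φ₂)) (-lam * φ₂ s - deriv φ₂ s) s := by
      have := (hv2 s).hasDerivAt; rwa [ode_deriv h2 s hs] at this
    have := ((hdZ1 s).neg).add
      ((((hu1 s).hasDerivAt.mul h3v).sub (h3u.mul (hv1 s).hasDerivAt)))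
    refine this.congr_deriv ?_
    simp only [hZ2, hZ1]
    ring
  -- the reversed Wronskian path solves the original companion system
  set g : ℝ → ℂ × ℂ × ℂ := fun x => (Z1 (L - x), -Z2 (L - x), Z3 (L - x)) with hg
  have hdg : ∀ x ∈ Icc (0 : ℝ) L, HasDerivAt g (T lam (g x)) x := by
    intro x hx
    have hsx : L - x ∈ Icc (0 : ℝ) L := ⟨by linarith [hx.2], by linarith [hx.1]⟩
    have c1 : HasDerivAt (fun y => Z1 (L - y)) (-(Z2 (L - x))) x :=
      (hdZ1 (L - x)).comp_const_sub L x
    have c2 : HasDerivAt (fun y => -Z2 (L - y)) (-(-(Z3 (L - x)))) x :=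
      ((hdZ2 (L - x) hsx).comp_const_sub L x).neg
    have c3 : HasDerivAt (fun y => Z3 (L - y)) (-(-(Z2 (L - x)) + lam * Z1 (L - x))) x :=
      (hdZ3 (L - x) hsx).comp_const_sub L x
    have hder := c1.prodMk (c2.prodMk c3)
    have : HasDerivAt g (-(Z2 (L - x)), -(-(Z3 (L - x))), -(-(Z2 (L - x)) + lam * Z1 (L - x))) x := hder
    convert this using 1
    simp only [hg, T_apply]
    refine Prod.ext ?_ (Prod.ext ?_ ?_) <;> simp <;> ring
  -- the combination f := d • g + β • Φ₂ solves the system and vanishes at L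
  set f : ℝ → ℂ × ℂ × ℂ := fun x =>
    deriv φ₂ L • g x
      + (φ₁ 0 * deriv (deriv φ₂) 0 - deriv (deriv φ₁) 0 * φ₁ 0)
          • (φ₂ x, deriv φ₂ x, deriv (deriv φ₂) x) with hfdef
  have hdf : ∀ x ∈ Icc (0 : ℝ) L, HasDerivAt f (T lam (f x)) x := by
    intro x hx
    have := ((hdg x hx).const_smul (deriv φ₂ L)).add
      ((hdΦ₂ x hx).const_smul (φ₁ 0 * deriv (deriv φ₂) 0 - deriv (deriv φ₁) 0 * φ₁ 0))
    simpa only [hfdef, map_add, map_smul, Pi.add_def, Pi.smul_def] using this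
  have hZ10 : Z1 0 = 0 := by simp [hZ1, hb4, hb5]
  have hZ20 : Z2 0 = φ₁ 0 * deriv (deriv φ₂) 0 - deriv (deriv φ₁) 0 * φ₁ 0 := by
    simp only [hZ2, hb0]
  have hZ30 : Z3 0 = 0 := by simp [hZ3, hZ1, hb4, hb5]
  have hZ1L : Z1 L = 0 := by simp [hZ1, hb2, hb3]
  have hZ2L : Z2 L = 0 := by simp [hZ2, hb2, hb3]
  have hZ3L : Z3 L = -(deriv (deriv φ₁) L * deriv φ₂ L) := by
    simp [hZ3, hZ1, hb2, hb3, hb6, hb7]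
  have hfL : f L = 0 := by
    simp only [hfdef, hg, sub_self, hZ10, hZ20, hZ30, hb3, hb7, Prod.smul_mk, smul_eq_mul,
      Prod.mk_add_mk, Prod.ext_iff, Prod.fst_zero, Prod.snd_zero]
    refine ⟨by ring, by ring, by ring⟩
  have hfz := sys_unique_left hdf hfL
  have key := hfz 0 h0L
  simp only [hfdef, hg, sub_zero, hZ1L, hZ2L, hZ3L, hb0, hb5, Prod.smul_mk, smul_eq_mul,
    Prod.mk_add_mk, Prod.ext_iff, Prod.fst_zero, Prod.snd_zero] at key
  obtain ⟨k1, -, k3⟩ := key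
  -- from k1 : the Wronskian boundary scalar β vanishes
  have hk1 : (φ₁ 0 * deriv (deriv φ₂) 0 - deriv (deriv φ₁) 0 * φ₁ 0) * φ₁ 0 = 0 := by
    linear_combination k1
  have hβ0 : φ₁ 0 * deriv (deriv φ₂) 0 - deriv (deriv φ₁) 0 * φ₁ 0 = 0 := by
    rcases mul_eq_zero.mp hk1 with h | h
    · exact h
    · rw [h]; ring
  have hed : deriv (deriv φ₁) L * deriv φ₂ L ^ 2 = 0 := by
    linear_combination -k3 + deriv (deriv φ₂) 0 * hβ0
  have hNe' : (ςNe : ℂ) ≠ 0 := by exact_mod_cast hNe.ne'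
  have hDi' : (ςDi : ℂ) ≠ 0 := by exact_mod_cast hDi.ne'
  rcases mul_eq_zero.mp hed with hE | hD
  · -- φ₁''(L) = 0 : φ₁ has zero Cauchy data at L, hence vanishes
    have hΦ₁L : (φ₁ L, deriv φ₁ L, deriv (deriv φ₁) L) = (0 : ℂ × ℂ × ℂ) := by
      rw [hb2, hb6, hE]; rfl
    have hΦ₁z := sys_unique_left hdΦ₁ hΦ₁L
    have h10 := hΦ₁z 0 h0L
    simp only [Prod.ext_iff, Prod.fst_zero, Prod.snd_zero] at h10
    obtain ⟨ha0, -, hc10⟩ := h10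
    have hc20 : deriv (deriv φ₂) 0 = 0 := by
      rw [hc10, mul_zero, zero_add] at hb1
      rcases mul_eq_zero.mp hb1 with h | h
      · exact absurd h hDi'
      · exact h
    have hΦ₂0 : (φ₂ 0, deriv φ₂ 0, deriv (deriv φ₂) 0) = (0 : ℂ × ℂ × ℂ) := by
      rw [hb0, ha0, hb5, hc20]; rfl
    have hΦ₂z := sys_unique_right hdΦ₂ hΦ₂0
    intro x hx
    have e1 := hΦ₁z x hx
    have e2 := hΦ₂z x hx
    simp only [Prod.ext_iff, Prod.fst_zero, Prod.snd_zero] at e1 e2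
    exact ⟨e1.1, e2.1⟩
  · -- φ₂'(L) = 0 : φ₂ has zero Cauchy data at L, hence vanishes
    have hD0 : deriv φ₂ L = 0 := by
      exact sq_eq_zero_iff.mp hD
    have hΦ₂L : (φ₂ L, deriv φ₂ L, deriv (deriv φ₂) L) = (0 : ℂ × ℂ × ℂ) := by
      rw [hb3, hb7, hD0]; rfl
    have hΦ₂z := sys_unique_left hdΦ₂ hΦ₂L
    have h20 := hΦ₂z 0 h0L
    simp only [Prod.ext_iff, Prod.fst_zero, Prod.snd_zero] at h20
    obtain ⟨ha0, -, hc20⟩ := h20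
    have hc10 : deriv (deriv φ₁) 0 = 0 := by
      rw [hc20, mul_zero, add_zero] at hb1
      rcases mul_eq_zero.mp hb1 with h | h
      · exact absurd h hNe'
      · exact h
    have ha0' : φ₁ 0 = 0 := by rw [← hb0]; exact ha0
    have hΦ₁0 : (φ₁ 0, deriv φ₁ 0, deriv (deriv φ₁) 0) = (0 : ℂ × ℂ × ℂ) := by
      rw [ha0', hb4, hc10]; rfl
    have hΦ₁z := sys_unique_right hdΦ₁ hΦ₁0
    intro x hx
    have e1 := hΦ₁z x hx
    have e2 := hΦ₂z x hx
    simp only [Prod.ext_iff, Prod.fst_zero, Prod.snd_zero] at e1 e2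
    exact ⟨e1.1, e2.1⟩
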